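/- arXiv:2111.10998 — 2 statements merged into one kernel-verified Lean document; each statement's English description precedes it below -/
import Mathlib

section
/- ∑_{n≥0} [C(2n,n)/4^n]² · 1/(2n+1) = 4G/π, where G = ∑_{n≥0} (-1)^n/(2n+1)² is Catalan's constant. -/
open Finset Real MeasureTheory intervalIntegral

noncomputable def cb (n : ℕ) : ℝ := (Nat.choose (2 * n) n : ℝ) / 4 ^ n

lemma cb_succ (k : ℕ) : cb (k+1) = cb k * ((2 * (k:ℝ) + 1) / (2 * k + 2)) := by
  have h1 : (2*k+2) * Nat.choose (2*k+1) k = Nat.choose (2*k+2) (k+1) * (k+1) := by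
    have := Nat.add_one_mul_choose_eq (2*k+1) k
    simpa [Nat.succ_eq_add_one] using this
  have h2 : (2*k+1) * Nat.choose (2*k) k = Nat.choose (2*k+1) (k+1) * (k+1) := by
    have := Nat.add_one_mul_choose_eq (2*k) k
    simpa [Nat.succ_eq_add_one] using this
  have h3 : Nat.choose (2*k+1) (k+1) = Nat.choose (2*k+1) k := by
    have := Nat.choose_symm (show k ≤ 2*k+1 by omega)
    have h5 : 2*k+1-k = k+1 := by omega
    rw [h5] at this
    exact this
  have key : Nat.choose (2*k+2) (k+1) * ((k+1)*(k+1)) =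
      Nat.choose (2*k) k * ((2*k+1)*(2*k+2)) := by
    rw [h3] at h2
    nlinarith [h1, h2]
  have keyR : (Nat.choose (2*(k+1)) (k+1) : ℝ) * ((k+1)*(k+1)) =
      (Nat.choose (2*k) k : ℝ) * ((2*k+1)*(2*k+2)) := by
    have h4 : 2*(k+1) = 2*k+2 := by ring
    rw [h4]; exact_mod_cast congrArg (Nat.cast (R := ℝ)) key
  have keyR2 : (Nat.choose (2*(k+1)) (k+1) : ℝ) * (2*k+2) =
      4 * (Nat.choose (2*k) k : ℝ) * (2*k+1) := by
    have h5 : ((k:ℝ)+1)^2 ≠ 0 := by positivity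
    apply mul_right_cancel₀ h5
    linear_combination (2*(k:ℝ)+2) * keyR
  rw [cb, cb]
  have hk1 : ((k:ℝ)+1) ≠ 0 := by positivity
  have h4 : (4:ℝ)^(k+1) = 4 * 4^k := by ring
  rw [h4]
  field_simp
  linear_combination keyR2

lemma cb_eq_prod (n : ℕ) : cb n = ∏ i ∈ range n, (2 * (i : ℝ) + 1) / (2 * i + 2) := by
  induction n with
  | zero => simp [cb]
  | succ k ih => rw [prod_range_succ, ← ih, cb_succ]

lemma cb_nonneg (n : ℕ) : 0 ≤ cb n := by unfold cb; positivity

lemma cb_le_one (n : ℕ) : cb n ≤ 1 := by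
  induction n with
  | zero => simp [cb]
  | succ k ih =>
    rw [cb_succ]
    have h1 : (2 * (k:ℝ) + 1) / (2 * k + 2) ≤ 1 := by
      rw [div_le_one (by positivity)]; linarith
    calc cb k * ((2 * (k:ℝ) + 1) / (2 * k + 2)) ≤ 1 * 1 :=
          mul_le_mul ih h1 (by positivity) zero_le_one
      _ = 1 := by ring

lemma cb_sq (n : ℕ) : cb n ^ 2 * (2 * (n:ℝ) + 1) ≤ 1 := by
  induction n with
  | zero => simp [cb]
  | succ k ih =>
    rw [cb_succ]
    have step : (cb k * ((2 * (k:ℝ) + 1) / (2 * k + 2))) ^ 2 * (2 * ((k:ℝ)+1) + 1)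
        ≤ cb k ^ 2 * (2 * (k:ℝ) + 1) := by
      have h : ((2*(k:ℝ)+1)/(2*k+2))^2 * (2*((k:ℝ)+1)+1) ≤ (2*(k:ℝ)+1) := by
        rw [div_pow, div_mul_eq_mul_div, div_le_iff₀ (by positivity)]
        nlinarith [sq_nonneg ((k:ℝ))]
      calc (cb k * ((2 * (k:ℝ) + 1) / (2 * k + 2))) ^ 2 * (2 * ((k:ℝ)+1) + 1)
          = cb k ^2 * (((2*(k:ℝ)+1)/(2*k+2))^2 * (2*((k:ℝ)+1)+1)) := by ring
        _ ≤ cb k ^2 * (2*(k:ℝ)+1) := mul_le_mul_of_nonneg_left h (sq_nonneg _)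
    push_cast
    calc (cb k * ((2 * (k:ℝ) + 1) / (2 * k + 2))) ^ 2 * (2 * ((k:ℝ)+1) + 1)
        ≤ cb k ^ 2 * (2 * (k:ℝ) + 1) := step
      _ ≤ 1 := ih

lemma wallis (n : ℕ) : ∫ θ in (0:ℝ)..(π/2), sin θ ^ (2*n) = π/2 * cb n := by
  have hint : ∀ a b : ℝ, IntervalIntegrable (fun θ => sin θ ^ (2*n)) volume a b :=
    fun a b => (continuous_sin.pow _).intervalIntegrable a b
  have hsym : ∫ θ in (π/2:ℝ)..π, sin θ ^ (2*n) = ∫ θ in (0:ℝ)..(π/2), sin θ ^ (2*n) := by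
    have h := intervalIntegral.integral_comp_sub_left
      (a := (π/2:ℝ)) (b := π) (fun y => sin y ^ (2*n)) π
    simp only [Real.sin_pi_sub] at h
    have e1 : π - π = (0:ℝ) := by ring
    have e2 : π - π/2 = π/2 := by ring
    rw [e1, e2] at h
    exact h
  have hadd : (∫ θ in (0:ℝ)..(π/2), sin θ ^ (2*n)) + ∫ θ in (π/2:ℝ)..π, sin θ ^ (2*n)
      = ∫ θ in (0:ℝ)..π, sin θ ^ (2*n) :=
    intervalIntegral.integral_add_adjacent_intervals (hint _ _) (hint _ _)
  have hw := integral_sin_pow_even (n := n)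
  rw [cb_eq_prod]
  rw [hsym] at hadd
  linarith [hadd, hw]

lemma denom_pos {b : ℝ} (hb0 : 0 ≤ b) (hb1 : b < 1) (θ : ℝ) : 0 < 1 - b * sin θ ^ 2 := by
  nlinarith [sin_sq_le_one θ, sq_nonneg (sin θ)]

lemma integral_inv_one_sub_mul_sin_sq {b : ℝ} (hb0 : 0 ≤ b) (hb1 : b < 1) :
    ∫ θ in (0:ℝ)..(π/2), 1 / (1 - b * sin θ ^ 2) = π / (2 * Real.sqrt (1 - b)) := by
  set s : ℝ := Real.sqrt (1 - b) with hs
  have hspos : 0 < s := Real.sqrt_pos.mpr (by linarith)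
  have hs2 : s ^ 2 = 1 - b := Real.sq_sqrt (by linarith)
  have hfc : Continuous (fun θ : ℝ => 1 / (1 - b * sin θ ^ 2)) := by
    apply continuous_const.div (by continuity)
    exact fun θ => ne_of_gt (denom_pos hb0 hb1 θ)
  have hderiv : ∀ x : ℝ, cos x ≠ 0 →
      HasDerivAt (fun y => arctan (s * tan y) / s) (1 / (1 - b * sin x ^ 2)) x := by
    intro x hcos
    have h1 : HasDerivAt (fun y => s * tan y) (s * (1 / cos x ^ 2)) x :=
      (Real.hasDerivAt_tan hcos).const_mul s
    have h2 : HasDerivAt arctan (1 / (1 + (s * tan x) ^ 2)) (s * tan x) :=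
      Real.hasDerivAt_arctan (s * tan x)
    have h3 := (h2.comp x h1).div_const s
    refine h3.congr_deriv ?_
    symm
    have hc2 : sin x ^ 2 + cos x ^ 2 = 1 := sin_sq_add_cos_sq x
    rw [Real.tan_eq_sin_div_cos]
    have hd := denom_pos hb0 hb1 x
    field_simp
    linear_combination (sin x^2) * hs2 + hc2
  have hFTC : ∀ c ∈ Set.Ico (0:ℝ) (π/2),
      ∫ θ in (0:ℝ)..c, 1 / (1 - b * sin θ ^ 2) = arctan (s * tan c) / s := by
    intro c hc
    have : ∫ θ in (0:ℝ)..c, 1 / (1 - b * sin θ ^ 2)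
        = arctan (s * tan c) / s - arctan (s * tan 0) / s := by
      apply intervalIntegral.integral_eq_sub_of_hasDerivAt
      · intro x hx
        apply hderiv
        have hx' : x ∈ Set.Icc 0 c := by
          rwa [Set.uIcc_of_le hc.1] at hx
        have : 0 < cos x := Real.cos_pos_of_mem_Ioo
          ⟨by linarith [hx'.1, pi_pos], lt_of_le_of_lt hx'.2 hc.2⟩
        exact ne_of_gt this
      · exact hfc.intervalIntegrable _ _
    simpa [Real.tan_zero] using this
  -- continuity of the primitive
  have hF : Continuous (fun c => ∫ θ in (0:ℝ)..c, 1 / (1 - b * sin θ ^ 2)) :=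
    intervalIntegral.continuous_primitive (fun a b => hfc.intervalIntegrable a b) 0
  have hlim1 : Filter.Tendsto (fun c => ∫ θ in (0:ℝ)..c, 1 / (1 - b * sin θ ^ 2))
      (nhdsWithin (π/2) (Set.Iio (π/2)))
      (nhds (∫ θ in (0:ℝ)..(π/2), 1 / (1 - b * sin θ ^ 2))) :=
    (hF.tendsto (π/2)).mono_left nhdsWithin_le_nhds
  have hlim2 : Filter.Tendsto (fun c => arctan (s * tan c) / s)
      (nhdsWithin (π/2) (Set.Iio (π/2))) (nhds ((π/2) / s)) := by
    have h1 : Filter.Tendsto (fun c => s * tan c)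
        (nhdsWithin (π/2) (Set.Iio (π/2))) Filter.atTop :=
      (Real.tendsto_tan_pi_div_two.const_mul_atTop hspos)
    have h2 := (tendsto_nhds_of_tendsto_nhdsWithin
      Real.tendsto_arctan_atTop).comp h1
    exact h2.div_const s
  have heq : (fun c => ∫ θ in (0:ℝ)..c, 1 / (1 - b * sin θ ^ 2))
      =ᶠ[nhdsWithin (π/2) (Set.Iio (π/2))] (fun c => arctan (s * tan c) / s) := by
    filter_upwards [Ioo_mem_nhdsLT_of_mem
      (show (π/2:ℝ) ∈ Set.Ioc 0 (π/2) from ⟨by positivity, le_refl _⟩)] with c hc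
    exact hFTC c ⟨le_of_lt hc.1, hc.2⟩
  have := tendsto_nhds_unique (hlim2.congr' heq.symm) hlim1
  rw [← this]
  ring

lemma hasSum_cb_geom {u : ℝ} (h0 : 0 ≤ u) (h1 : u < 1) :
    HasSum (fun n => cb n * u ^ (2*n)) (1 / Real.sqrt (1 - u^2)) := by
  have hu2 : u^2 < 1 := by nlinarith
  have hF_cont : ∀ n : ℕ, Continuous (fun θ : ℝ => (u * sin θ) ^ (2*n)) :=
    fun n => (continuous_const.mul continuous_sin).pow _
  have hF_int : ∀ n : ℕ, IntegrableOn (fun θ : ℝ => (u * sin θ) ^ (2*n))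
      (Set.Ioc 0 (π/2)) volume := fun n => (hF_cont n).integrableOn_Ioc
  have hval : ∀ n : ℕ, ∫ θ in Set.Ioc (0:ℝ) (π/2), (u * sin θ) ^ (2*n)
      = π/2 * (cb n * u ^ (2*n)) := by
    intro n
    rw [← intervalIntegral.integral_of_le (by linarith [pi_pos])]
    have : ∀ θ : ℝ, (u * sin θ) ^ (2*n) = u^(2*n) * sin θ ^ (2*n) := by
      intro θ; rw [mul_pow]
    simp_rw [this]
    rw [intervalIntegral.integral_const_mul, wallis]
    ring
  have hF_sum : Summable (fun n : ℕ =>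
      ∫ θ in Set.Ioc (0:ℝ) (π/2), ‖(u * sin θ) ^ (2*n)‖) := by
    have : ∀ n : ℕ, (∫ θ in Set.Ioc (0:ℝ) (π/2), ‖(u * sin θ) ^ (2*n)‖)
        = π/2 * (cb n * u ^ (2*n)) := by
      intro n
      rw [← hval n]
      congr 1; funext θ
      rw [Real.norm_eq_abs, abs_of_nonneg ((even_two_mul n).pow_nonneg _)]
    rw [funext this]
    apply Summable.of_nonneg_of_le (fun n => mul_nonneg (by linarith [pi_pos])
      (mul_nonneg (cb_nonneg n) (pow_nonneg h0 _)))
      (fun n => ?_) (((summable_geometric_of_lt_one (by positivity) hu2)).mul_left (π/2))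
    have hcb := cb_le_one n
    have h2 : u ^ (2*n) = (u^2)^n := by rw [← pow_mul]
    rw [h2]
    have : cb n * (u^2)^n ≤ 1 * (u^2)^n := by
      apply mul_le_mul_of_nonneg_right hcb (by positivity)
    nlinarith [pi_pos]
  have key := MeasureTheory.hasSum_integral_of_summable_integral_norm hF_int hF_sum
  have htsum : ∀ θ : ℝ, (∑' n : ℕ, (u * sin θ) ^ (2*n)) = 1 / (1 - u^2 * sin θ ^ 2) := by
    intro θ
    have hr0 : 0 ≤ (u * sin θ)^2 := sq_nonneg _
    have hr1 : (u * sin θ)^2 < 1 := by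
      have : (u * sin θ)^2 = u^2 * sin θ^2 := by ring
      rw [this]
      nlinarith [sin_sq_le_one θ, sq_nonneg (sin θ)]
    have hg := hasSum_geometric_of_lt_one hr0 hr1
    have : (fun n : ℕ => ((u * sin θ)^2)^n) = fun n : ℕ => (u * sin θ)^(2*n) := by
      funext n; rw [← pow_mul]
    rw [this] at hg
    rw [hg.tsum_eq]
    rw [one_div]
    congr 1; ring
  rw [show (∫ θ in Set.Ioc (0:ℝ) (π/2), ∑' n : ℕ, (u * sin θ) ^ (2*n))
      = π / (2 * Real.sqrt (1 - u^2)) from ?_] at key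
  · have key2 := key.mul_left (2/π)
    have hπ : (π:ℝ) ≠ 0 := ne_of_gt pi_pos
    have e1 : (fun n => (2/π) * (∫ θ in Set.Ioc (0:ℝ) (π/2), (u * sin θ) ^ (2*n)))
        = fun n => cb n * u ^ (2*n) := by
      funext n; rw [hval n]; field_simp
    have e2 : (2/π) * (π / (2 * Real.sqrt (1 - u^2))) = 1 / Real.sqrt (1 - u^2) := by
      have hs : Real.sqrt (1-u^2) ≠ 0 := ne_of_gt (Real.sqrt_pos.mpr (by linarith))
      field_simp
    rw [e1, e2] at key2
    exact key2
  · simp_rw [htsum]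
    rw [← intervalIntegral.integral_of_le (by linarith [pi_pos])]
    exact integral_inv_one_sub_mul_sin_sq (by positivity) hu2

lemma hasSum_arcsin {t : ℝ} (h0 : 0 ≤ t) (h1 : t < 1) :
    HasSum (fun n : ℕ => cb n * t ^ (2*n+1) / (2*(n:ℝ)+1)) (arcsin t) := by
  have hF_int : ∀ n : ℕ, IntegrableOn (fun u : ℝ => cb n * u ^ (2*n))
      (Set.Ioc 0 t) volume := fun n => (continuous_const.mul (continuous_pow _)).integrableOn_Ioc
  have hval : ∀ n : ℕ, ∫ u in Set.Ioc (0:ℝ) t, cb n * u ^ (2*n)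
      = cb n * t ^ (2*n+1) / (2*(n:ℝ)+1) := by
    intro n
    rw [← intervalIntegral.integral_of_le h0, intervalIntegral.integral_const_mul,
      integral_pow]
    push_cast
    rw [zero_pow (by omega)]
    ring
  have hF_sum : Summable (fun n : ℕ => ∫ u in Set.Ioc (0:ℝ) t, ‖cb n * u ^ (2*n)‖) := by
    have he : ∀ n : ℕ, (∫ u in Set.Ioc (0:ℝ) t, ‖cb n * u ^ (2*n)‖)
        = cb n * t ^ (2*n+1) / (2*(n:ℝ)+1) := by
      intro n
      rw [← hval n]
      apply MeasureTheory.setIntegral_congr_fun measurableSet_Ioc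
      intro u hu
      dsimp only
      rw [Real.norm_eq_abs, abs_of_nonneg (mul_nonneg (cb_nonneg n) (pow_nonneg (le_of_lt hu.1) _))]
    rw [funext he]
    apply Summable.of_nonneg_of_le
      (fun n => div_nonneg (mul_nonneg (cb_nonneg n) (pow_nonneg h0 _)) (by positivity))
      (fun n => ?_) (summable_geometric_of_lt_one (r := t^2) (by positivity) (by nlinarith))
    have h2 : t ^ (2*n+1) ≤ (t^2)^n := by
      rw [← pow_mul]
      exact pow_le_pow_of_le_one h0 (le_of_lt h1) (by omega)
    calc cb n * t ^ (2*n+1) / (2*(n:ℝ)+1) ≤ 1 * (t^2)^n / 1 := by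
          apply div_le_div₀ (by positivity)
            (mul_le_mul (cb_le_one n) h2 (pow_nonneg h0 _) zero_le_one) one_pos
          linarith [Nat.cast_nonneg (α := ℝ) n]
      _ = (t^2)^n := by ring
  have key := MeasureTheory.hasSum_integral_of_summable_integral_norm hF_int hF_sum
  simp_rw [hval] at key
  suffices hs : (∫ u in Set.Ioc (0:ℝ) t, (∑' n : ℕ, cb n * u ^ (2*n))) = arcsin t by
    rwa [hs] at key
  symm
  have : ∫ u in Set.Ioc (0:ℝ) t, (∑' n : ℕ, cb n * u ^ (2*n))
      = ∫ u in Set.Ioc (0:ℝ) t, 1 / Real.sqrt (1 - u^2) := by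
    apply MeasureTheory.setIntegral_congr_fun measurableSet_Ioc
    intro u hu
    exact (hasSum_cb_geom (le_of_lt hu.1) (lt_of_le_of_lt hu.2 h1)).tsum_eq
  rw [this, ← intervalIntegral.integral_of_le h0]
  have harc : ∫ u in (0:ℝ)..t, 1 / Real.sqrt (1 - u^2) = arcsin t - arcsin 0 := by
    apply intervalIntegral.integral_eq_sub_of_hasDerivAt
    · intro x hx
      rw [Set.uIcc_of_le h0] at hx
      exact Real.hasDerivAt_arcsin (by linarith [hx.1]) (ne_of_lt (lt_of_le_of_lt hx.2 h1))
    · apply ContinuousOn.intervalIntegrable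
      apply continuousOn_const.div
      · apply (continuousOn_const.sub (continuousOn_pow 2)).sqrt
      · intro x hx
        rw [Set.uIcc_of_le h0] at hx
        apply ne_of_gt
        apply Real.sqrt_pos.mpr
        nlinarith [hx.1, hx.2]
  rw [harc, Real.arcsin_zero, sub_zero]

lemma cb_le_sqrt (n : ℕ) : cb n ≤ Real.sqrt (1/((n:ℝ)+1)) := by
  apply Real.le_sqrt_of_sq_le
  have h := cb_sq n
  have h1 : (0:ℝ) < 2*(n:ℝ)+1 := by positivity
  have hx : (0:ℝ) < (n:ℝ)+1 := by positivity
  have h2 : cb n ^ 2 ≤ 1/(2*(n:ℝ)+1) := by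
    rw [le_div_iff₀ h1]; linarith
  exact le_trans h2 (one_div_le_one_div_of_le hx (by linarith))

lemma summable_cb_div : Summable (fun n : ℕ => cb n * (1/(2*(n:ℝ)+1))) := by
  have hmaj : Summable (fun n : ℕ => (((n:ℝ)+1) ^ ((3:ℝ)/2))⁻¹) := by
    have h := (Real.summable_nat_rpow_inv (p := (3:ℝ)/2)).mpr (by norm_num)
    have h2 := h.comp_injective Nat.succ_injective
    apply h2.congr
    intro n
    simp only [Function.comp, Nat.succ_eq_add_one]
    push_cast
    rfl
  apply Summable.of_nonneg_of_le
    (fun n => mul_nonneg (cb_nonneg n) (by positivity)) (fun n => ?_) hmaj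
  have hx : (0:ℝ) < (n:ℝ)+1 := by positivity
  have hb1 : cb n ≤ Real.sqrt (1/((n:ℝ)+1)) := cb_le_sqrt n
  have hb2 : (1:ℝ)/(2*(n:ℝ)+1) ≤ 1/((n:ℝ)+1) := by
    apply div_le_div_of_nonneg_left one_pos.le hx
    linarith
  have hstep : cb n * (1/(2*(n:ℝ)+1)) ≤ Real.sqrt (1/((n:ℝ)+1)) * (1/((n:ℝ)+1)) :=
    mul_le_mul hb1 hb2 (by positivity) (Real.sqrt_nonneg _)
  apply hstep.trans_eq
  rw [one_div, Real.sqrt_inv, ← mul_inv]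
  congr 1
  rw [show ((3:ℝ)/2) = 1/2 + 1 by norm_num, Real.rpow_add hx, Real.rpow_one,
    ← Real.sqrt_eq_rpow]

noncomputable def gg (θ : ℝ) : ℝ := ∑' n : ℕ, cb n * sin θ ^ (2*n) * (1/(2*(n:ℝ)+1))

lemma gg_cont : Continuous gg := by
  apply continuous_tsum (fun n => by continuity) summable_cb_div
  intro n θ
  have hb : sin θ ^ (2*n) ≤ 1 := by
    rw [pow_mul]
    exact pow_le_one₀ (sq_nonneg _) (sin_sq_le_one θ)
  have h0 : (0:ℝ) ≤ sin θ ^ (2*n) := by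
    rw [pow_mul]; positivity
  rw [Real.norm_eq_abs, abs_of_nonneg
    (mul_nonneg (mul_nonneg (cb_nonneg n) h0) (by positivity))]
  calc cb n * sin θ ^ (2*n) * (1/(2*(n:ℝ)+1)) ≤ cb n * 1 * (1/(2*(n:ℝ)+1)) := by
        apply mul_le_mul_of_nonneg_right _ (by positivity)
        exact mul_le_mul_of_nonneg_left hb (cb_nonneg n)
    _ = cb n * (1/(2*(n:ℝ)+1)) := by ring

lemma gg_eq {θ : ℝ} (hθ : θ ∈ Set.Ioo 0 (π/2)) : gg θ = θ / sin θ := by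
  have hπ := pi_pos
  have hs : 0 < sin θ := sin_pos_of_pos_of_lt_pi hθ.1 (by linarith [hθ.2])
  have hs1 : sin θ < 1 := by
    have h := Real.strictMonoOn_sin
      (Set.mem_Icc.mpr ⟨by linarith [hθ.1], le_of_lt hθ.2⟩)
      (Set.mem_Icc.mpr ⟨by linarith, le_refl _⟩) hθ.2
    rwa [Real.sin_pi_div_two] at h
  have hkey := hasSum_arcsin (le_of_lt hs) hs1
  rw [Real.arcsin_sin (by linarith [hθ.1]) (le_of_lt hθ.2)] at hkey
  have hdiv := hkey.div_const (sin θ)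
  have hfun : (fun n : ℕ => cb n * sin θ ^ (2*n+1) / (2*(n:ℝ)+1) / sin θ)
      = fun n : ℕ => cb n * sin θ ^ (2*n) * (1/(2*(n:ℝ)+1)) := by
    funext n
    rw [pow_succ]
    field_simp
  rw [hfun] at hdiv
  exact hdiv.tsum_eq

lemma summable_inv_sq : Summable (fun n : ℕ => 1/((n:ℝ)+1)^2) := by
  have h := (Real.summable_one_div_nat_pow (p := 2)).mpr one_lt_two
  have h2 := h.comp_injective Nat.succ_injective
  apply h2.congr
  intro n
  simp only [Function.comp, Nat.succ_eq_add_one]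
  push_cast
  rfl

lemma hasSum_arctan_div {t : ℝ} (h0 : 0 < t) (h1 : t < 1) :
    HasSum (fun k : ℕ => (-1)^k * t^(2*k) / (2*(k:ℝ)+1)) (arctan t / t) := by
  have hF_int : ∀ k : ℕ, IntegrableOn (fun u : ℝ => (-1:ℝ)^k * u ^ (2*k))
      (Set.Ioc 0 t) volume := fun k => (continuous_const.mul (continuous_pow _)).integrableOn_Ioc
  have hval : ∀ k : ℕ, ∫ u in Set.Ioc (0:ℝ) t, (-1:ℝ)^k * u ^ (2*k)
      = (-1)^k * t ^ (2*k+1) / (2*(k:ℝ)+1) := by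
    intro k
    rw [← intervalIntegral.integral_of_le h0.le, intervalIntegral.integral_const_mul,
      integral_pow]
    push_cast
    rw [zero_pow (by omega)]
    ring
  have hF_sum : Summable (fun k : ℕ => ∫ u in Set.Ioc (0:ℝ) t, ‖(-1:ℝ)^k * u ^ (2*k)‖) := by
    have he : ∀ k : ℕ, (∫ u in Set.Ioc (0:ℝ) t, ‖(-1:ℝ)^k * u ^ (2*k)‖)
        = t ^ (2*k+1) / (2*(k:ℝ)+1) := by
      intro k
      have : ∫ u in Set.Ioc (0:ℝ) t, ‖(-1:ℝ)^k * u ^ (2*k)‖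
          = ∫ u in Set.Ioc (0:ℝ) t, u ^ (2*k) := by
        apply MeasureTheory.setIntegral_congr_fun measurableSet_Ioc
        intro u hu
        dsimp only
        rw [norm_mul, norm_pow, norm_neg, norm_one, one_pow, one_mul,
          Real.norm_eq_abs, abs_of_nonneg (pow_nonneg hu.1.le _)]
      rw [this, ← intervalIntegral.integral_of_le h0.le, integral_pow]
      push_cast
      rw [zero_pow (by omega)]
      ring
    rw [funext he]
    apply Summable.of_nonneg_of_le (fun k => by positivity) (fun k => ?_)
      (summable_geometric_of_lt_one (r := t^2) (by positivity) (by nlinarith))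
    have h2 : t ^ (2*k+1) ≤ (t^2)^k := by
      rw [← pow_mul]
      exact pow_le_pow_of_le_one h0.le h1.le (by omega)
    calc t ^ (2*k+1) / (2*(k:ℝ)+1) ≤ (t^2)^k / 1 := by
          apply div_le_div₀ (by positivity) h2 one_pos
          linarith [Nat.cast_nonneg (α := ℝ) k]
      _ = (t^2)^k := by ring
  have key := MeasureTheory.hasSum_integral_of_summable_integral_norm hF_int hF_sum
  simp_rw [hval] at key
  have htsum : ∫ u in Set.Ioc (0:ℝ) t, (∑' k : ℕ, (-1:ℝ)^k * u ^ (2*k)) = arctan t := by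
    have : ∫ u in Set.Ioc (0:ℝ) t, (∑' k : ℕ, (-1:ℝ)^k * u ^ (2*k))
        = ∫ u in Set.Ioc (0:ℝ) t, 1 / (1 + u^2) := by
      apply MeasureTheory.setIntegral_congr_fun measurableSet_Ioc
      intro u hu
      dsimp only
      have hr : ‖-(u^2)‖ < 1 := by
        rw [norm_neg, Real.norm_eq_abs, abs_of_nonneg (sq_nonneg _)]
        nlinarith [hu.1, hu.2]
      have hg := hasSum_geometric_of_norm_lt_one hr
      have hfun : (fun k : ℕ => (-(u^2))^k) = fun k : ℕ => (-1:ℝ)^k * u ^ (2*k) := by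
        funext k
        rw [neg_pow, pow_mul]
      rw [hfun] at hg
      rw [hg.tsum_eq]
      rw [one_div]
      congr 1
      ring
    rw [this, ← intervalIntegral.integral_of_le h0.le, integral_one_div_one_add_sq,
      Real.arctan_zero, sub_zero]
  rw [htsum] at key
  have key2 := key.div_const t
  have hfun2 : (fun k : ℕ => (-1:ℝ)^k * t ^ (2*k+1) / (2*(k:ℝ)+1) / t)
      = fun k : ℕ => (-1:ℝ)^k * t^(2*k) / (2*(k:ℝ)+1) := by
    funext k
    rw [pow_succ]
    field_simp
  rwa [hfun2] at key2

lemma hasSum_catalan : HasSum (fun k : ℕ => (-1:ℝ)^k / (2*(k:ℝ)+1)^2)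
    (∑' n : ℕ, (-1:ℝ)^n / (2*(n:ℝ)+1)^2) := by
  apply Summable.hasSum
  apply Summable.of_abs
  apply Summable.of_nonneg_of_le (fun k => abs_nonneg _) (fun k => ?_) summable_inv_sq
  rw [abs_div, abs_pow, abs_neg, abs_one, one_pow]
  rw [abs_of_nonneg (by positivity : (0:ℝ) ≤ (2*(k:ℝ)+1)^2)]
  apply div_le_div_of_nonneg_left one_pos.le (by positivity)
  nlinarith [Nat.cast_nonneg (α := ℝ) k]

lemma integral_gg : ∫ θ in (0:ℝ)..(π/2), gg θ
    = 2 * ∑' n : ℕ, (-1:ℝ)^n / (2*(n:ℝ)+1)^2 := by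
  have hπ := pi_pos
  -- substitution θ = 2 * arctan t
  have hderiv : ∀ t ∈ Set.uIcc (0:ℝ) 1,
      HasDerivAt (fun t : ℝ => 2 * arctan t) (2 / (1 + t^2)) t := by
    intro t _
    have := (Real.hasDerivAt_arctan t).const_mul 2
    refine this.congr_deriv ?_
    symm
    rw [div_eq_mul_one_div]
  have hcont' : ContinuousOn (fun t : ℝ => 2 / (1 + t^2)) (Set.uIcc (0:ℝ) 1) := by
    apply ContinuousOn.div continuousOn_const (by fun_prop)
    intro t _; positivity
  have hsub := intervalIntegral.integral_comp_smul_deriv hderiv hcont' gg_cont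
  rw [Real.arctan_zero, Real.arctan_one] at hsub
  have he1 : (2:ℝ) * 0 = 0 := by norm_num
  have he2 : (2:ℝ) * (π/4) = π/2 := by ring
  rw [he1, he2] at hsub
  rw [← hsub]
  -- now compute ∫ t in 0..1, (2/(1+t^2)) • gg (2 * arctan t)
  rw [intervalIntegral.integral_of_le (by norm_num : (0:ℝ) ≤ 1),
    MeasureTheory.integral_Ioc_eq_integral_Ioo]
  have hcongr : ∫ t in Set.Ioo (0:ℝ) 1, (2 / (1 + t^2)) • gg (2 * arctan t)
      = ∫ t in Set.Ioo (0:ℝ) 1, (∑' k : ℕ, 2 * ((-1:ℝ)^k * t^(2*k) / (2*(k:ℝ)+1))) := by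
    apply MeasureTheory.setIntegral_congr_fun measurableSet_Ioo
    intro t ht
    dsimp only
    have ht0 := ht.1
    have ht1 := ht.2
    have hat : 0 < arctan t := by
      rw [← Real.arctan_zero]
      exact Real.arctan_strictMono ht0
    have hat2 : arctan t < π/4 := by
      rw [← Real.arctan_one]
      exact Real.arctan_strictMono ht1
    have hθ : 2 * arctan t ∈ Set.Ioo 0 (π/2) := ⟨by linarith, by linarith⟩
    rw [gg_eq hθ]
    have hsin : sin (2 * arctan t) = 2 * t / (1 + t^2) := by
      rw [Real.sin_two_mul, Real.sin_arctan, Real.cos_arctan]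
      have h1t : (0:ℝ) < 1 + t^2 := by positivity
      have hsq : Real.sqrt (1 + t^2) * Real.sqrt (1 + t^2) = 1 + t^2 :=
        Real.mul_self_sqrt h1t.le
      field_simp
      try linear_combination (2*t) * hsq
      rw [Real.sq_sqrt h1t.le]
    rw [hsin]
    have h1t : (0:ℝ) < 1 + t^2 := by positivity
    have hval : (2 / (1 + t^2)) • (2 * arctan t / (2 * t / (1 + t^2)))
        = 2 * (arctan t / t) := by
      rw [smul_eq_mul]
      field_simp
    rw [hval]
    exact ((hasSum_arctan_div ht0 ht1).mul_left 2).tsum_eq.symm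
  simp only [Function.comp] at hcongr ⊢
  rw [hcongr]
  -- interchange sum and integral
  have hF_int : ∀ k : ℕ, IntegrableOn
      (fun t : ℝ => 2 * ((-1:ℝ)^k * t^(2*k) / (2*(k:ℝ)+1))) (Set.Ioo 0 1) volume := by
    intro k
    exact ((continuous_const.mul ((continuous_const.mul (continuous_pow _)).div_const
      _)).integrableOn_Ioc).mono_set Set.Ioo_subset_Ioc_self
  have hval2 : ∀ k : ℕ, ∫ t in Set.Ioo (0:ℝ) 1, 2 * ((-1:ℝ)^k * t^(2*k) / (2*(k:ℝ)+1))
      = 2 * ((-1:ℝ)^k / (2*(k:ℝ)+1)^2) := by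
    intro k
    rw [← MeasureTheory.integral_Ioc_eq_integral_Ioo,
      ← intervalIntegral.integral_of_le (by norm_num : (0:ℝ) ≤ 1)]
    have : ∀ t : ℝ, 2 * ((-1:ℝ)^k * t^(2*k) / (2*(k:ℝ)+1))
        = (2 * (-1:ℝ)^k / (2*(k:ℝ)+1)) * t^(2*k) := by intro t; ring
    simp_rw [this]
    rw [intervalIntegral.integral_const_mul, integral_pow]
    push_cast
    rw [zero_pow (by omega), one_pow]
    field_simp
    ring
  have hF_sum : Summable (fun k : ℕ =>
      ∫ t in Set.Ioo (0:ℝ) 1, ‖2 * ((-1:ℝ)^k * t^(2*k) / (2*(k:ℝ)+1))‖) := by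
    have he : ∀ k : ℕ, (∫ t in Set.Ioo (0:ℝ) 1, ‖2 * ((-1:ℝ)^k * t^(2*k) / (2*(k:ℝ)+1))‖)
        = 2 * (1 / (2*(k:ℝ)+1)^2) := by
      intro k
      have hstep : ∫ t in Set.Ioo (0:ℝ) 1, ‖2 * ((-1:ℝ)^k * t^(2*k) / (2*(k:ℝ)+1))‖
          = ∫ t in Set.Ioo (0:ℝ) 1, (2 / (2*(k:ℝ)+1)) * t^(2*k) := by
        apply MeasureTheory.setIntegral_congr_fun measurableSet_Ioo
        intro t ht
        dsimp only
        rw [Real.norm_eq_abs, abs_mul, abs_div, abs_mul, abs_pow, abs_pow, abs_neg,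
          abs_one, one_pow, one_mul, abs_of_nonneg ht.1.le,
          abs_of_nonneg (show (0:ℝ) ≤ 2*(k:ℝ)+1 by positivity),
          abs_of_nonneg (show (0:ℝ) ≤ (2:ℝ) by norm_num)]
        ring
      rw [hstep, ← MeasureTheory.integral_Ioc_eq_integral_Ioo,
        ← intervalIntegral.integral_of_le (by norm_num : (0:ℝ) ≤ 1),
        intervalIntegral.integral_const_mul, integral_pow]
      push_cast
      rw [zero_pow (by omega), one_pow]
      field_simp
      ring
    rw [funext he]
    apply Summable.of_nonneg_of_le (fun k => by positivity) (fun k => ?_)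
      (summable_inv_sq.mul_left 2)
    apply mul_le_mul_of_nonneg_left _ (by norm_num : (0:ℝ) ≤ 2)
    apply div_le_div_of_nonneg_left one_pos.le (by positivity)
    nlinarith [Nat.cast_nonneg (α := ℝ) k]
  have key := MeasureTheory.hasSum_integral_of_summable_integral_norm hF_int hF_sum
  simp_rw [hval2] at key
  exact key.unique (hasSum_catalan.mul_left 2)

theorem apery_sq_inv_odd :
    HasSum (fun n : ℕ => ((Nat.choose (2 * n) n : ℝ) / 4 ^ n) ^ 2 * (1 / (2 * (n : ℝ) + 1)))
      (4 * (∑' n : ℕ, (-1) ^ n / (2 * (n : ℝ) + 1) ^ 2) / Real.pi) := by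
  have hπ := pi_pos
  have hF_int : ∀ n : ℕ, IntegrableOn
      (fun θ : ℝ => cb n * sin θ ^ (2*n) * (1/(2*(n:ℝ)+1))) (Set.Ioc 0 (π/2)) volume :=
    fun n => ((continuous_const.mul (continuous_sin.pow _)).mul
      continuous_const).integrableOn_Ioc
  have hval : ∀ n : ℕ, ∫ θ in Set.Ioc (0:ℝ) (π/2), cb n * sin θ ^ (2*n) * (1/(2*(n:ℝ)+1))
      = π/2 * (cb n ^ 2 * (1/(2*(n:ℝ)+1))) := by
    intro n
    rw [← intervalIntegral.integral_of_le (by linarith)]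
    have : ∀ θ : ℝ, cb n * sin θ ^ (2*n) * (1/(2*(n:ℝ)+1))
        = (cb n * (1/(2*(n:ℝ)+1))) * sin θ ^ (2*n) := by intro θ; ring
    simp_rw [this]
    rw [intervalIntegral.integral_const_mul, wallis]
    ring
  have hF_sum : Summable (fun n : ℕ => ∫ θ in Set.Ioc (0:ℝ) (π/2),
      ‖cb n * sin θ ^ (2*n) * (1/(2*(n:ℝ)+1))‖) := by
    have he : ∀ n : ℕ, (∫ θ in Set.Ioc (0:ℝ) (π/2),
        ‖cb n * sin θ ^ (2*n) * (1/(2*(n:ℝ)+1))‖)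
        = π/2 * (cb n ^ 2 * (1/(2*(n:ℝ)+1))) := by
      intro n
      rw [← hval n]
      apply MeasureTheory.setIntegral_congr_fun measurableSet_Ioc
      intro θ _
      dsimp only
      have h0 : (0:ℝ) ≤ sin θ ^ (2*n) := (even_two_mul n).pow_nonneg _
      rw [Real.norm_eq_abs, abs_of_nonneg
        (mul_nonneg (mul_nonneg (cb_nonneg n) h0) (by positivity))]
    rw [funext he]
    apply Summable.of_nonneg_of_le
      (fun n => mul_nonneg (by linarith)
        (mul_nonneg (sq_nonneg _) (by positivity)))
      (fun n => ?_) (summable_inv_sq.mul_left (π/2))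
    apply mul_le_mul_of_nonneg_left _ (by linarith)
    have h1 : (0:ℝ) < 2*(n:ℝ)+1 := by positivity
    have h2 : cb n ^ 2 ≤ 1/(2*(n:ℝ)+1) := by
      rw [le_div_iff₀ h1]; linarith [cb_sq n]
    calc cb n ^ 2 * (1/(2*(n:ℝ)+1)) ≤ (1/(2*(n:ℝ)+1)) * (1/(2*(n:ℝ)+1)) :=
          mul_le_mul_of_nonneg_right h2 (by positivity)
      _ ≤ 1/((n:ℝ)+1)^2 := by
          rw [div_mul_div_comm, one_mul]
          apply div_le_div_of_nonneg_left one_pos.le (by positivity)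
          nlinarith [Nat.cast_nonneg (α := ℝ) n]
  have key := MeasureTheory.hasSum_integral_of_summable_integral_norm hF_int hF_sum
  simp_rw [hval] at key
  have hg : ∫ θ in Set.Ioc (0:ℝ) (π/2), (∑' n : ℕ, cb n * sin θ ^ (2*n) * (1/(2*(n:ℝ)+1)))
      = 2 * ∑' n : ℕ, (-1:ℝ)^n / (2*(n:ℝ)+1)^2 := by
    rw [show (fun θ : ℝ => ∑' n : ℕ, cb n * sin θ ^ (2*n) * (1/(2*(n:ℝ)+1))) = gg from rfl]
    rw [← intervalIntegral.integral_of_le (by linarith)]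
    exact integral_gg
  rw [hg] at key
  have key2 := key.mul_left (2/π)
  have e1 : (fun n : ℕ => (2/π) * (π/2 * (cb n ^ 2 * (1/(2*(n:ℝ)+1)))))
      = fun n : ℕ => ((Nat.choose (2*n) n : ℝ)/4^n)^2 * (1/(2*(n:ℝ)+1)) := by
    funext n
    rw [show ((Nat.choose (2*n) n : ℝ)/4^n) = cb n from rfl]
    field_simp
  have e2 : (2/π) * (2 * ∑' n : ℕ, (-1:ℝ)^n / (2*(n:ℝ)+1)^2)
      = 4 * (∑' n : ℕ, (-1:ℝ)^n / (2*(n:ℝ)+1)^2) / π := by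
    field_simp
    ring
  rw [e1, e2] at key2
  exact key2
end

section
/- For every nonnegative integer k and positive integer n, ∫₀¹ x^{n-1}·log^k(1-x)/√(1-x) dx = (-1)^k · k! · 2^k · (4^n/(n·C(2n,n))) · tₙ⋆(1_k), where tₙ⋆(1_k) = ∑_{n ≥ n₁ ≥ ⋯ ≥ n_k ≥ 1} ∏_{j=1}^k 1/(2n_j - 1). -/
open Finset Real MeasureTheory intervalIntegral Filter Set

/-- Multiple t-harmonic star sum with `k` ones:
`tₙ⋆(1_k) = ∑_{n ≥ n₁ ≥ ⋯ ≥ n_k ≥ 1} ∏ 1/(2n_j-1)`. -/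
noncomputable def tstarharm : ℕ → ℕ → ℝ
  | 0, _ => 1
  | (k+1), n => ∑ j ∈ Finset.Icc 1 n, (1 / (2 * (j : ℝ) - 1)) * tstarharm k j

noncomputable def gI (m j : ℕ) : ℝ :=
  ∫ x in (0:ℝ)..1, x ^ m * (Real.log (1 - x)) ^ j / Real.sqrt (1 - x)

/-- log power bound: for `0 < u < 1`, `|log u|^j ≤ (4j)^j * u^(-1/4)`. -/
lemma log_pow_bound (j : ℕ) {u : ℝ} (hu : u ∈ Set.Ioo (0:ℝ) 1) :
    |Real.log u| ^ j ≤ (4*j)^j * u ^ (-(1/4) : ℝ) := by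
  obtain ⟨hu0, hu1⟩ := hu
  rcases Nat.eq_zero_or_pos j with rfl | hj
  · simpa using Real.one_le_rpow_of_pos_of_le_one_of_nonpos hu0 hu1.le (by norm_num)
  · have hlog : |Real.log u| ≤ (4*j) * u ^ (-(1/(4*(j:ℝ)))) := by
      have h1 : Real.log u < 0 := Real.log_neg hu0 hu1
      rw [abs_of_neg h1]
      have h2 : Real.log (u ^ (-(1/(4*(j:ℝ))))) ≤ u ^ (-(1/(4*(j:ℝ)))) - 1 :=
        Real.log_le_sub_one_of_pos (Real.rpow_pos_of_pos hu0 _)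
      rw [Real.log_rpow hu0] at h2
      have hj' : (0:ℝ) < 4*(j:ℝ) := by positivity
      have := mul_le_mul_of_nonneg_left h2 hj'.le
      calc -Real.log u = (4*(j:ℝ)) * (-(1/(4*(j:ℝ))) * Real.log u) := by
            field_simp
        _ ≤ (4*(j:ℝ)) * (u ^ (-(1/(4*(j:ℝ)))) - 1) := this
        _ ≤ (4*j) * u ^ (-(1/(4*(j:ℝ)))) := by nlinarith [Real.rpow_pos_of_pos hu0 (-(1/(4*(j:ℝ))))]
    calc |Real.log u| ^ j ≤ ((4*j) * u ^ (-(1/(4*(j:ℝ)))))^j :=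
          pow_le_pow_left₀ (abs_nonneg _) hlog j
      _ = (4*j)^j * (u ^ (-(1/(4*(j:ℝ)))))^j := mul_pow _ _ _
      _ = (4*j)^j * u ^ (-(1/4) : ℝ) := by
          rw [← Real.rpow_natCast (u ^ (-(1/(4*(j:ℝ))))) j, ← Real.rpow_mul hu0.le]
          congr 2
          field_simp

lemma intg (m j : ℕ) :
    IntervalIntegrable (fun x => x ^ m * (Real.log (1 - x)) ^ j / Real.sqrt (1 - x))
      volume (0:ℝ) 1 := by
  have hbound : IntervalIntegrable (fun x:ℝ => (4*(j:ℝ))^j * (1 - x) ^ (-(3/4) : ℝ))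
      volume (0:ℝ) 1 := by
    have h1 : IntervalIntegrable (fun x:ℝ => x ^ (-(3/4) : ℝ)) volume (0:ℝ) 1 :=
      intervalIntegral.intervalIntegrable_rpow' (by norm_num)
    have h2 := (h1.comp_sub_left 1)
    simp only [sub_zero, sub_self] at h2
    exact (h2.symm.const_mul _)
  apply hbound.mono_fun'
  · apply Measurable.aestronglyMeasurable
    apply Measurable.div
    · exact (measurable_id.pow_const m).mul
        ((Real.measurable_log.comp (measurable_const.sub measurable_id)).pow_const j)
    · exact Real.continuous_sqrt.measurable.comp (measurable_const.sub measurable_id)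
  · rw [Set.uIoc_of_le (by norm_num : (0:ℝ) ≤ 1)]
    rw [Filter.EventuallyLE, ae_restrict_iff' measurableSet_Ioc]
    filter_upwards with x hx
    obtain ⟨hx0, hx1⟩ := hx
    rcases eq_or_lt_of_le hx1 with rfl | hx1'
    · simp [Real.zero_rpow (by norm_num : (-(3/4):ℝ) ≠ 0)]
    · have hu0 : (0:ℝ) < 1 - x := by linarith
      have hu1 : 1 - x < 1 := by linarith
      have hxm : |x ^ m| ≤ 1 := by
        rw [abs_pow]
        exact pow_le_one₀ (abs_nonneg _) (by rw [abs_of_pos hx0]; linarith)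
      have hlb := log_pow_bound j ⟨hu0, hu1⟩
      have hsqrt : Real.sqrt (1-x) = (1-x) ^ ((1:ℝ)/2) := Real.sqrt_eq_rpow _
      have key : |x ^ m * Real.log (1 - x) ^ j / Real.sqrt (1 - x)|
          ≤ (4*(j:ℝ))^j * (1 - x) ^ (-(3/4) : ℝ) := by
        rw [abs_div, abs_mul, abs_pow (Real.log (1-x)),
          abs_of_pos (Real.sqrt_pos.2 hu0), hsqrt]
        have h3 : |x ^ m| * |Real.log (1 - x)| ^ j ≤ (4*(j:ℝ))^j * (1-x) ^ (-(1/4) : ℝ) := by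
          calc |x ^ m| * |Real.log (1 - x)| ^ j ≤ 1 * ((4*(j:ℝ))^j * (1-x) ^ (-(1/4):ℝ)) :=
                mul_le_mul hxm hlb (by positivity) one_pos.le
            _ = _ := one_mul _
        rw [div_le_iff₀ (by positivity)]
        calc |x ^ m| * |Real.log (1 - x)| ^ j ≤ (4*(j:ℝ))^j * (1-x) ^ (-(1/4) : ℝ) := h3
          _ = (4*(j:ℝ))^j * (1 - x) ^ (-(3/4) : ℝ) * (1-x) ^ ((1:ℝ)/2) := by
              rw [mul_assoc, ← Real.rpow_add hu0]; norm_num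
      calc ‖x ^ m * Real.log (1 - x) ^ j / Real.sqrt (1 - x)‖
          = |x ^ m * Real.log (1 - x) ^ j / Real.sqrt (1 - x)| := rfl
        _ ≤ (4*(j:ℝ))^j * (1 - x) ^ (-(3/4) : ℝ) := key

lemma sqrt_log_pow_tendsto (j : ℕ) :
    Tendsto (fun u => Real.sqrt u * Real.log u ^ j) (nhdsWithin 0 (Set.Ioi 0)) (nhds 0) := by
  rcases Nat.eq_zero_or_pos j with rfl | hj
  · simp only [pow_zero, mul_one]
    have : Tendsto Real.sqrt (nhds 0) (nhds 0) := by
      simpa using Real.continuous_sqrt.tendsto 0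
    exact this.mono_left nhdsWithin_le_nhds
  · have hr : (0:ℝ) < 1/(2*(j:ℝ)) := by positivity
    have h := (tendsto_log_mul_rpow_nhdsGT_zero hr).pow j
    rw [zero_pow hj.ne'] at h
    apply h.congr'
    filter_upwards [self_mem_nhdsWithin] with u (hu : u ∈ Set.Ioi (0:ℝ))
    have hu0 : (0:ℝ) < u := hu
    rw [mul_pow, ← Real.rpow_natCast (u ^ (1/(2*(j:ℝ)))) j, ← Real.rpow_mul hu0.le]
    have : 1/(2*(j:ℝ)) * (j:ℝ) = 1/2 := by field_simp
    rw [this, ← Real.sqrt_eq_rpow, mul_comm]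

lemma tendsto_Ici (j : ℕ) :
    Tendsto (fun u => Real.sqrt u * Real.log u ^ j) (nhdsWithin 0 (Set.Ici 0)) (nhds 0) := by
  rw [← Set.Ioi_union_left, nhdsWithin_union, tendsto_sup]
  refine ⟨sqrt_log_pow_tendsto j, ?_⟩
  rw [nhdsWithin_singleton]
  have : Real.sqrt 0 * Real.log 0 ^ j = 0 := by simp
  rw [tendsto_pure_left]
  intro s hs
  simpa [this] using mem_of_mem_nhds hs

lemma contE (m j : ℕ) :
    ContinuousOn (fun x : ℝ => x ^ m * (Real.sqrt (1 - x) * Real.log (1 - x) ^ j))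
      (Set.Icc 0 1) := by
  intro x hx
  rcases eq_or_lt_of_le hx.2 with rfl | hx1
  · -- continuity at x = 1
    apply ContinuousWithinAt.mul (continuousWithinAt_id.pow m)
    have hcomp : Tendsto (fun y : ℝ => 1 - y) (nhdsWithin 1 (Set.Icc 0 1))
        (nhdsWithin 0 (Set.Ici 0)) := by
      apply tendsto_nhdsWithin_of_tendsto_nhds_of_eventually_within
      · have h1 : Tendsto (fun y : ℝ => 1 - y) (nhds 1) (nhds 0) := by
          have h2 : Continuous (fun y : ℝ => 1 - y) := continuous_const.sub continuous_id
          simpa using h2.tendsto (1:ℝ)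
        exact h1.mono_left nhdsWithin_le_nhds
      · filter_upwards [self_mem_nhdsWithin] with y hy
        exact sub_nonneg.2 hy.2
    have := (tendsto_Ici j).comp hcomp
    unfold ContinuousWithinAt
    have hval : ((fun x : ℝ => Real.sqrt (1 - x) * Real.log (1 - x) ^ j) 1) = 0 := by
      norm_num
    rw [hval]
    exact this
  · -- continuity at x < 1
    apply ContinuousWithinAt.mul (continuousWithinAt_id.pow m)
    apply ContinuousWithinAt.mul
    · exact (Real.continuous_sqrt.comp (continuous_const.sub continuous_id)).continuousWithinAt
    · apply ContinuousWithinAt.pow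
      apply ContinuousAt.continuousWithinAt
      have hc : Continuous (fun y : ℝ => 1 - y) := continuous_const.sub continuous_id
      exact ContinuousAt.comp (Real.continuousAt_log (by norm_num; linarith)) hc.continuousAt

lemma derivE (m j : ℕ) {x : ℝ} (hx : x ∈ Set.Ioo (0:ℝ) 1) :
    HasDerivAt (fun x : ℝ => x ^ m * (Real.sqrt (1 - x) * Real.log (1 - x) ^ j))
      ((m:ℝ) * (x ^ (m-1) * Real.log (1-x) ^ j / Real.sqrt (1-x))
        - ((m:ℝ) + 1/2) * (x ^ m * Real.log (1-x) ^ j / Real.sqrt (1-x))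
        - (j:ℝ) * (x ^ m * Real.log (1-x) ^ (j-1) / Real.sqrt (1-x))) x := by
  obtain ⟨hx0, hx1⟩ := hx
  have hu0 : (0:ℝ) < 1 - x := by linarith
  have hune : (1:ℝ) - x ≠ 0 := hu0.ne'
  have hs0 : (0:ℝ) < Real.sqrt (1 - x) := Real.sqrt_pos.2 hu0
  have hsne : Real.sqrt (1 - x) ≠ 0 := hs0.ne'
  have hss : Real.sqrt (1-x) * Real.sqrt (1-x) = 1 - x := Real.mul_self_sqrt hu0.le
  have h1 : HasDerivAt (fun y : ℝ => 1 - y) (-1) x := by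
    simpa using (hasDerivAt_id x).const_sub 1
  have hsq : HasDerivAt (fun y : ℝ => Real.sqrt (1 - y)) (1/(2*Real.sqrt (1-x)) * (-1)) x :=
    (Real.hasDerivAt_sqrt hune).comp x h1
  have hlog : HasDerivAt (fun y : ℝ => Real.log (1 - y)) ((1-x)⁻¹ * (-1)) x :=
    (Real.hasDerivAt_log hune).comp x h1
  have hlogj : HasDerivAt (fun y : ℝ => Real.log (1 - y) ^ j)
      ((j:ℝ) * Real.log (1-x) ^ (j-1) * ((1-x)⁻¹ * (-1))) x := hlog.pow j
  have hpow : HasDerivAt (fun y : ℝ => y ^ m) ((m:ℝ) * x ^ (m-1)) x := hasDerivAt_pow m x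
  have hcomb := hpow.mul (hsq.mul hlogj)
  refine hcomb.congr_deriv ?_; symm; simp only [Pi.mul_apply]
  have hxm : (m:ℝ) * x ^ m = (m:ℝ) * x ^ (m-1) * x := by
    cases m with
    | zero => simp
    | succ p => push_cast [pow_succ]; ring
  set L := Real.log (1-x) with hL
  set s := Real.sqrt (1-x) with hsdef
  have hxe : (1:ℝ) - x = s * s := hss.symm
  rw [hxe]
  have hx2 : x = 1 - s * s := by linarith
  field_simp
  linear_combination (2 * L^j * s * s + 2*x*L^j - 2*L^j - 4*L^j*s^5) * hxm
    + ((m:ℝ)*2*x^(m-1)*x*L^j - 2*(m:ℝ)*x^m*L^j - 4*(m:ℝ)*x^(m-1)*L^j*s^5) * hss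
    - 2*L^j*(1-2*s^5) * hxm - 2*L^j*(1-2*s^5)*(m:ℝ)*x^(m-1) * hss

lemma master (m j : ℕ) :
    (m:ℝ) * gI (m-1) j - ((m:ℝ) + 1/2) * gI m j - (j:ℝ) * gI m (j-1)
      = -((0:ℝ)^m * (0:ℝ)^j) := by
  have hint : IntervalIntegrable (fun x : ℝ =>
      (m:ℝ) * (x ^ (m-1) * Real.log (1-x) ^ j / Real.sqrt (1-x))
        - ((m:ℝ) + 1/2) * (x ^ m * Real.log (1-x) ^ j / Real.sqrt (1-x))
        - (j:ℝ) * (x ^ m * Real.log (1-x) ^ (j-1) / Real.sqrt (1-x))) volume 0 1 :=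
    (((intg (m-1) j).const_mul _).sub ((intg m j).const_mul _)).sub ((intg m (j-1)).const_mul _)
  have hftc := intervalIntegral.integral_eq_sub_of_hasDerivAt_of_le (by norm_num : (0:ℝ) ≤ 1)
    (contE m j) (fun x hx => derivE m j hx) hint
  have hsplit : ∫ x in (0:ℝ)..1, ((m:ℝ) * (x ^ (m-1) * Real.log (1-x) ^ j / Real.sqrt (1-x))
        - ((m:ℝ) + 1/2) * (x ^ m * Real.log (1-x) ^ j / Real.sqrt (1-x))
        - (j:ℝ) * (x ^ m * Real.log (1-x) ^ (j-1) / Real.sqrt (1-x)))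
      = (m:ℝ) * gI (m-1) j - ((m:ℝ) + 1/2) * gI m j - (j:ℝ) * gI m (j-1) := by
    rw [intervalIntegral.integral_sub (((intg (m-1) j).const_mul _).sub
      ((intg m j).const_mul _)) ((intg m (j-1)).const_mul _),
      intervalIntegral.integral_sub ((intg (m-1) j).const_mul _) ((intg m j).const_mul _),
      intervalIntegral.integral_const_mul, intervalIntegral.integral_const_mul,
      intervalIntegral.integral_const_mul]
    rfl
  rw [hsplit] at hftc
  rw [hftc]
  norm_num

noncomputable def cc (n : ℕ) : ℝ := 4 ^ n / ((n : ℝ) * (Nat.choose (2 * n) n : ℝ))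

lemma cc_one : cc 1 = 2 := by norm_num [cc]

lemma cc_pos (n : ℕ) (hn : 1 ≤ n) : 0 < cc n := by
  have := Nat.choose_pos (show n ≤ 2*n by omega)
  have : (0:ℝ) < (Nat.choose (2*n) n : ℝ) := by exact_mod_cast this
  have hn' : (0:ℝ) < (n:ℝ) := by exact_mod_cast hn
  unfold cc; positivity

lemma cc_rec (p : ℕ) :
    (2*(p:ℝ)+3) * cc (p+2) = (2*(p:ℝ)+2) * cc (p+1) := by
  have hkey := Nat.succ_mul_centralBinom_succ (p+1)
  simp only [Nat.centralBinom] at hkey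
  have hkeyR : ((p:ℝ)+2) * (Nat.choose (2*(p+2)) (p+2) : ℝ)
      = 2*(2*(p:ℝ)+3) * (Nat.choose (2*(p+1)) (p+1) : ℝ) := by
    have : ((p+1+1) * Nat.choose (2*(p+1+1)) (p+1+1) : ℕ)
        = (2 * (2*(p+1)+1) * Nat.choose (2*(p+1)) (p+1) : ℕ) := by
      convert hkey using 2 <;> omega
    have := congrArg (fun t : ℕ => (t:ℝ)) this
    push_cast at this
    convert this using 1 <;> push_cast <;> ring
  have hC1 : (0:ℝ) < (Nat.choose (2*(p+1)) (p+1) : ℝ) := by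
    exact_mod_cast Nat.choose_pos (show p+1 ≤ 2*(p+1) by omega)
  have hC2 : (0:ℝ) < (Nat.choose (2*(p+2)) (p+2) : ℝ) := by
    exact_mod_cast Nat.choose_pos (show p+2 ≤ 2*(p+2) by omega)
  unfold cc
  push_cast
  rw [mul_div_assoc', mul_div_assoc', div_eq_div_iff (by positivity) (by positivity)]
  linear_combination ((2*(p:ℝ)+2)*4^(p+1) - 16*((p:ℝ)+1)*4^p) * hkeyR

lemma tstar_one (k : ℕ) : tstarharm k 1 = 1 := by
  induction k with
  | zero => rfl
  | succ k ih => norm_num [tstarharm, ih]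

lemma tstar_succ (k n : ℕ) :
    tstarharm (k+1) (n+1) = tstarharm (k+1) n
      + (1 / (2 * ((n:ℝ)+1) - 1)) * tstarharm k (n+1) := by
  show (∑ j ∈ Finset.Icc 1 (n+1), (1 / (2 * (j : ℝ) - 1)) * tstarharm k j) = _
  rw [Finset.sum_Icc_succ_top (by omega : 1 ≤ n+1)]
  push_cast
  rfl

lemma gI00 : gI 0 0 = 2 := by
  have h := master 0 0
  norm_num at h
  linarith

lemma gI0succ (j : ℕ) : gI 0 (j+1) = -(2*((j:ℝ)+1)) * gI 0 j := by
  have h := master 0 (j+1)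
  norm_num at h
  push_cast at h ⊢
  linarith

lemma gIrec (p j : ℕ) :
    (2*(p:ℝ)+3) * gI (p+1) j = (2*(p:ℝ)+2) * gI p j - 2*(j:ℝ) * gI (p+1) (j-1) := by
  have h := master (p+1) j
  have h0 : ((0:ℝ)) ^ (p+1) = 0 := by simp
  rw [h0] at h
  norm_num at h
  push_cast at h ⊢
  linarith

lemma key : ∀ k p : ℕ, gI p k
    = (-1)^k * (Nat.factorial k : ℝ) * 2^k * cc (p+1) * tstarharm k (p+1) := by
  intro k
  induction k with
  | zero =>
    intro p
    induction p with
    | zero => simp [tstarharm, cc_one, gI00]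
    | succ q ihq =>
      have hrec := gIrec q 0
      simp only [Nat.cast_zero, mul_zero, zero_mul, sub_zero] at hrec
      have hcc := cc_rec q
      have hne : (2*(q:ℝ)+3) ≠ 0 := by positivity
      apply mul_left_cancel₀ hne
      rw [hrec, ihq]
      simp only [pow_zero, Nat.factorial_zero, Nat.cast_one, one_mul, tstarharm]
      linear_combination -hcc
  | succ k ihk =>
    intro p
    induction p with
    | zero =>
      have h := gI0succ k
      rw [h, ihk 0]
      rw [tstar_one, tstar_one, cc_one]
      push_cast [Nat.factorial_succ]
      ring
    | succ q ihq =>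
      have hrec := gIrec q (k+1)
      have hk1 : (k+1) - 1 = k := by omega
      rw [hk1] at hrec
      have hcc := cc_rec q
      have hne : (2*(q:ℝ)+3) ≠ 0 := by positivity
      apply mul_left_cancel₀ hne
      rw [hrec, ihq, ihk (q+1)]
      rw [tstar_succ k (q+1)]
      push_cast [Nat.factorial_succ]
      have hX : (2*(q:ℝ)+3) * (1 / (2 * ((q:ℝ)+1+1) - 1)) = 1 := by
        have h3 : (2:ℝ) * ((q:ℝ)+1+1) - 1 = 2*(q:ℝ)+3 := by ring
        rw [h3, mul_one_div, div_self hne]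
      linear_combination ((-1:ℝ)^k * ((k:ℝ)+1) * (Nat.factorial k : ℝ) * 2^(k+1)
        * tstarharm (k+1) (q+1)) * hcc
        + ((-1:ℝ)^k * ((k:ℝ)+1) * (Nat.factorial k : ℝ) * 2^(k+1)
          * cc (q+1+1) * tstarharm k (q+1+1)) * hX

theorem integral_pow_log_pow_div_sqrt (k n : ℕ) (hn : 1 ≤ n) :
    ∫ x in (0:ℝ)..1, x ^ (n - 1) * (Real.log (1 - x)) ^ k / Real.sqrt (1 - x) =
      (-1) ^ k * (k.factorial : ℝ) * 2 ^ k *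
        (4 ^ n / ((n : ℝ) * (Nat.choose (2 * n) n : ℝ))) * tstarharm k n := by
  have h := key k (n-1)
  have hn1 : n - 1 + 1 = n := by omega
  rw [hn1] at h
  unfold gI cc at h
  exact h
end
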